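/- Suppose e = ds in S_m with ℓ(e) = ℓ(d) + 1 for a simple transposition s = (k, k+1), and suppose both d and e lie in X_{J(μ)} for a composition μ of m. Let t, t' be the sequences of type μ with w(t) = e^{-1}w_{J(μ)} and w(t') = d^{-1}w_{J(μ)}. Then t is obtained from t' by swapping the entries in positions k and k+1, and the entry of t' in position k is strictly smaller than the entry in position k+1. -/

import Mathlib

/- Conventions: `S_m = Equiv.Perm (Fin m)`, 0-based positions, values and symbols.
The paper product `ab` is `b * a` in Mathlib, so the paper relation `e = ds` with
`s = (k, k+1)` becomes `e = s * d`, and the paper element `x⁻¹w_{J(μ)}` is `w0 * x⁻¹`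
(`w0 = w_{J(μ)}`, the longest element of the Young subgroup).  The paper positions
`k, k+1` (1-based) are `k, k+1` (0-based) here.  Length = number of inversions. -/

def invLen {m : ℕ} (w : Equiv.Perm (Fin m)) : ℕ :=
  (Finset.univ.filter (fun p : Fin m × Fin m => p.1 < p.2 ∧ w p.2 < w p.1)).card

def inYoung {m : ℕ} (μ : Composition m) (u : Equiv.Perm (Fin m)) : Prop :=
  ∀ i : Fin m, μ.index (u i) = μ.index i

def isMinRep {m : ℕ} (μ : Composition m) (x : Equiv.Perm (Fin m)) : Prop :=
  ∀ u : Equiv.Perm (Fin m), inYoung μ u → invLen x ≤ invLen (x * u)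

def ofTypeL {m : ℕ} (μ : Composition m) (t : List ℕ) : Prop :=
  t.length = m ∧ (∀ a ∈ t, a < μ.length) ∧
    ∀ k : Fin μ.length, t.count (k : ℕ) = μ.blocksFun k

def seqPermVal {m : ℕ} (μ : Composition m) (t : List ℕ) (p : ℕ) : ℕ :=
  μ.sizeUpTo (t.getD p 0 + 1) - 1 - (t.take p).count (t.getD p 0)

def isSeqPerm {m : ℕ} (μ : Composition m) (t : List ℕ) (w : Equiv.Perm (Fin m)) : Prop :=
  ∀ p : Fin m, (w p : ℕ) = seqPermVal μ t (p : ℕ)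

lemma invLen_inv {m : ℕ} (x : Equiv.Perm (Fin m)) : invLen x⁻¹ = invLen x := by
  unfold invLen
  apply Finset.card_bij (fun p _ => (x⁻¹ p.2, x⁻¹ p.1))
  · intro p hp
    simp only [Finset.mem_filter, Finset.mem_univ, true_and] at hp ⊢
    simpa using hp.symm
  · intro p hp q hq h
    simp only [Prod.mk.injEq, EmbeddingLike.apply_eq_iff_eq] at h
    exact Prod.ext h.2 h.1
  · intro p hp
    simp only [Finset.mem_filter, Finset.mem_univ, true_and] at hp ⊢
    exact ⟨(x p.2, x p.1), by simpa using hp.symm, by simp⟩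

lemma swap_lt_iff {m v : ℕ} (hv : v + 1 < m) (a b : Fin m) :
    Equiv.swap (⟨v, Nat.lt_of_succ_lt hv⟩ : Fin m) ⟨v+1, hv⟩ b < Equiv.swap (⟨v, Nat.lt_of_succ_lt hv⟩ : Fin m) ⟨v+1, hv⟩ a
      ↔ ((b < a ∧ ¬((a : ℕ) = v + 1 ∧ (b : ℕ) = v)) ∨ ((a : ℕ) = v ∧ (b : ℕ) = v + 1)) := by
  simp only [Equiv.swap_apply_def, Fin.lt_def, Fin.ext_iff]
  split_ifs <;> simp_all <;> omega

lemma invLen_swap_mul {m v : ℕ} (hv : v + 1 < m) (x : Equiv.Perm (Fin m))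
    (h : x⁻¹ ⟨v, Nat.lt_of_succ_lt hv⟩ < x⁻¹ ⟨v+1, hv⟩) :
    invLen (Equiv.swap (⟨v, Nat.lt_of_succ_lt hv⟩ : Fin m) ⟨v+1, hv⟩ * x) = invLen x + 1 := by
  set s := Equiv.swap (⟨v, Nat.lt_of_succ_lt hv⟩ : Fin m) ⟨v+1, hv⟩ with hs
  set P : Fin m × Fin m := (x⁻¹ ⟨v, Nat.lt_of_succ_lt hv⟩, x⁻¹ ⟨v+1, hv⟩) with hP
  have hxP1 : x P.1 = ⟨v, Nat.lt_of_succ_lt hv⟩ := by simp [hP]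
  have hxP2 : x P.2 = ⟨v+1, hv⟩ := by simp [hP]
  have key : (Finset.univ.filter (fun p : Fin m × Fin m => p.1 < p.2 ∧ (s * x) p.2 < (s * x) p.1))
      = insert P (Finset.univ.filter (fun p : Fin m × Fin m => p.1 < p.2 ∧ x p.2 < x p.1)) := by
    ext p
    simp only [Finset.mem_insert, Finset.mem_filter, Finset.mem_univ, true_and]
    simp only [Equiv.Perm.mul_apply]
    rw [hs, swap_lt_iff hv (x p.1) (x p.2)]
    constructor
    · rintro ⟨hlt, hc | hc⟩
      · exact Or.inr ⟨hlt, hc.1⟩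
      · left
        have h1 : p.1 = P.1 := by
          apply x.injective; rw [hxP1]; exact Fin.ext hc.1
        have h2 : p.2 = P.2 := by
          apply x.injective; rw [hxP2]; exact Fin.ext hc.2
        exact Prod.ext h1 h2
    · rintro (rfl | ⟨hlt, hinv⟩)
      · refine ⟨h, Or.inr ?_⟩
        rw [hxP1, hxP2]
        exact ⟨rfl, rfl⟩
      · refine ⟨hlt, Or.inl ⟨hinv, ?_⟩⟩
        rintro ⟨h1, h2⟩
        have h1' : p.1 = P.2 := by apply x.injective; rw [hxP2]; exact Fin.ext h1
        have h2' : p.2 = P.1 := by apply x.injective; rw [hxP1]; exact Fin.ext h2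
        rw [h1', h2'] at hlt
        exact absurd (h.trans hlt) (lt_irrefl _)
  have hPnot : P ∉ Finset.univ.filter (fun p : Fin m × Fin m => p.1 < p.2 ∧ x p.2 < x p.1) := by
    simp only [Finset.mem_filter, Finset.mem_univ, true_and, not_and]
    intro _
    rw [hxP1, hxP2]
    simp [Fin.lt_def]
  unfold invLen
  rw [key, Finset.card_insert_of_notMem hPnot]

lemma invLen_swap_mul' {m v : ℕ} (hv : v + 1 < m) (x : Equiv.Perm (Fin m))
    (h : x⁻¹ ⟨v+1, hv⟩ < x⁻¹ ⟨v, Nat.lt_of_succ_lt hv⟩) :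
    invLen (Equiv.swap (⟨v, Nat.lt_of_succ_lt hv⟩ : Fin m) ⟨v+1, hv⟩ * x) + 1 = invLen x := by
  have h2 : (Equiv.swap (⟨v, Nat.lt_of_succ_lt hv⟩ : Fin m) ⟨v+1, hv⟩ * x)⁻¹ ⟨v, Nat.lt_of_succ_lt hv⟩
      < (Equiv.swap (⟨v, Nat.lt_of_succ_lt hv⟩ : Fin m) ⟨v+1, hv⟩ * x)⁻¹ ⟨v+1, hv⟩ := by
    simp only [mul_inv_rev, Equiv.Perm.mul_apply]
    rw [Equiv.swap_inv, Equiv.swap_apply_left, Equiv.swap_apply_right]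
    exact h
  have h3 := invLen_swap_mul hv _ h2
  rw [← mul_assoc, Equiv.swap_mul_self, one_mul] at h3
  omega

lemma index_eq_of {m : ℕ} (μ : Composition m) (j : Fin m) (i : Fin μ.length)
    (h1 : μ.sizeUpTo i ≤ (j : ℕ)) (h2 : (j : ℕ) < μ.sizeUpTo (i + 1)) : μ.index j = i := by
  rcases lt_trichotomy (μ.index j) i with hlt | heq | hgt
  · have := μ.sizeUpTo_index_le j
    have hm : μ.sizeUpTo ((μ.index j : ℕ) + 1) ≤ μ.sizeUpTo i := μ.monotone_sizeUpTo hlt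
    have := μ.lt_sizeUpTo_index_succ j
    simp only [Fin.succ] at this
    omega
  · exact heq
  · have hm : μ.sizeUpTo ((i : ℕ) + 1) ≤ μ.sizeUpTo (μ.index j) := μ.monotone_sizeUpTo hgt
    have := μ.sizeUpTo_index_le j
    omega

lemma index_mono {m : ℕ} (μ : Composition m) {a b : Fin m} (h : a ≤ b) :
    μ.index a ≤ μ.index b := by
  by_contra hc
  push_neg at hc
  have h1 : μ.sizeUpTo ((μ.index b : ℕ) + 1) ≤ μ.sizeUpTo (μ.index a) :=
    μ.monotone_sizeUpTo hc
  have h2 := μ.sizeUpTo_index_le a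
  have h3 := μ.lt_sizeUpTo_index_succ b
  simp only [Fin.succ] at h3
  have : (a : ℕ) ≤ b := h
  omega

lemma seq_entry {m : ℕ} (μ : Composition m) (t : List ℕ) (w : Equiv.Perm (Fin m))
    (ht : ofTypeL μ t) (hw : isSeqPerm μ t w) (p : ℕ) (hp : p < m) :
    t.getD p 0 = (μ.index (w ⟨p, hp⟩) : ℕ) := by
  obtain ⟨hlen, hbd, hcnt⟩ := ht
  have hpl : p < t.length := by omega
  set a := t.getD p 0 with ha
  have hget : t.getD p 0 = t[p] := List.getD_eq_getElem t 0 hpl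
  have hmem : a ∈ t := by rw [ha, hget]; exact List.getElem_mem hpl
  have haμ : a < μ.length := hbd a hmem
  have hcnta : t.count a = μ.blocksFun ⟨a, haμ⟩ := hcnt ⟨a, haμ⟩
  have hsplit : t.count a = (t.take p).count a + (t.drop p).count a := by
    conv_lhs => rw [← List.take_append_drop p t]
    exact List.count_append
  have hdropmem : a ∈ t.drop p := by
    rw [ha, hget, List.drop_eq_getElem_cons hpl]
    exact List.mem_cons_self
  have hdrop1 : 1 ≤ (t.drop p).count a := List.one_le_count_iff.mpr hdropmem
  have hblk1 : 1 ≤ μ.blocksFun ⟨a, haμ⟩ := μ.one_le_blocksFun _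
  have hc : (t.take p).count a ≤ μ.blocksFun ⟨a, haμ⟩ - 1 := by omega
  have hsu : μ.sizeUpTo (a + 1) = μ.sizeUpTo a + μ.blocksFun ⟨a, haμ⟩ := by
    rw [Composition.sizeUpTo_succ μ haμ]; rfl
  have hv := hw ⟨p, hp⟩
  simp only [seqPermVal, ← ha] at hv
  have hlow : μ.sizeUpTo a ≤ (w ⟨p, hp⟩ : ℕ) := by omega
  have hhigh : (w ⟨p, hp⟩ : ℕ) < μ.sizeUpTo (a + 1) := by omega
  have := index_eq_of μ (w ⟨p, hp⟩) ⟨a, haμ⟩ hlow hhigh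
  rw [this]

lemma exists_adjacent_descent {m : ℕ} (μ : Composition m) (w : Equiv.Perm (Fin m))
    (a b : Fin m) (hab : a < b) (hidx : μ.index a = μ.index b) (hw : w b < w a) :
    ∃ p : ℕ, ∃ hp : p + 1 < m,
      μ.index (⟨p, Nat.lt_of_succ_lt hp⟩ : Fin m) = μ.index ⟨p + 1, hp⟩ ∧
      w ⟨p + 1, hp⟩ < w ⟨p, Nat.lt_of_succ_lt hp⟩ := by
  have H : ∀ n : ℕ, ∀ a b : Fin m, (b : ℕ) - a = n → a < b →
      μ.index a = μ.index b → w b < w a →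
      ∃ p : ℕ, ∃ hp : p + 1 < m,
        μ.index (⟨p, Nat.lt_of_succ_lt hp⟩ : Fin m) = μ.index ⟨p + 1, hp⟩ ∧
        w ⟨p + 1, hp⟩ < w ⟨p, Nat.lt_of_succ_lt hp⟩ := by
    intro n
    induction n using Nat.strong_induction_on with
    | _ n ih =>
      intro a b hn hab hidx hw
      have hab' : (a : ℕ) < b := hab
      rcases Nat.lt_or_ge ((a : ℕ) + 1) b with h1 | h1
      · have hc : (a : ℕ) + 1 < m := by omega
        set c : Fin m := ⟨(a : ℕ) + 1, hc⟩ with hcdef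
        have hac : a < c := by simp [hcdef, Fin.lt_def]
        have hcb : c < b := by simp [hcdef, Fin.lt_def]; omega
        have hidxc : μ.index c = μ.index a := by
          have h2 := index_mono μ (le_of_lt hac)
          have h3 := index_mono μ (le_of_lt hcb)
          rw [hidx] at h2 ⊢
          exact le_antisymm h3 h2
        rcases lt_or_gt_of_ne (fun h => (ne_of_lt hac) (w.injective h) : w a ≠ w c) with h2 | h2
        · exact ih ((b : ℕ) - c) (by simp [hcdef]; omega) c b rfl hcb
            (hidxc.trans hidx) (lt_trans hw h2)
        · exact ih ((c : ℕ) - a) (by simp [hcdef]; omega) a c rfl hac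
            hidxc.symm h2
      · have hbm : (a : ℕ) + 1 < m := by have := b.isLt; omega
        refine ⟨a, hbm, ?_, ?_⟩
        · have h2 : (⟨(a : ℕ), by omega⟩ : Fin m) = a := rfl
          have h3 : (⟨(a : ℕ) + 1, hbm⟩ : Fin m) = b := Fin.ext (by simp; omega)
          rw [h2, h3]; exact hidx
        · have h2 : (⟨(a : ℕ), by omega⟩ : Fin m) = a := rfl
          have h3 : (⟨(a : ℕ) + 1, hbm⟩ : Fin m) = b := Fin.ext (by simp; omega)
          rw [h2, h3]; exact hw
  exact H _ a b rfl hab hidx hw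

lemma swap_inYoung {m : ℕ} (μ : Composition m) (a b : Fin m)
    (h : μ.index a = μ.index b) : inYoung μ (Equiv.swap a b) := by
  intro i
  rcases eq_or_ne i a with rfl | hia
  · rw [Equiv.swap_apply_left]; exact h.symm
  rcases eq_or_ne i b with rfl | hib
  · rw [Equiv.swap_apply_right]; exact h
  · rw [Equiv.swap_apply_of_ne_of_ne hia hib]

attribute [irreducible] invLen

set_option maxHeartbeats 1000000 in
/-- if `e = ds` with `ℓ(e) = ℓ(d) + 1`, `s = (k, k+1)`, and `d, e` are both
distinguished coset representatives in `X_{J(μ)}`, and `w(t) = e⁻¹w_{J(μ)}`,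
`w(t') = d⁻¹w_{J(μ)}`, then `t` is obtained from `t'` by swapping the entries in
positions `k` and `k+1`, and the entry of `t'` in position `k` is strictly smaller than
the one in position `k+1`. -/
theorem stmt9 (m : ℕ) (μ : Composition m) (w0 d e : Equiv.Perm (Fin m)) (k : ℕ)
    (hk : k + 1 < m)
    (hw0 : inYoung μ w0) (hw0max : ∀ u, inYoung μ u → invLen u ≤ invLen w0)
    (hd : isMinRep μ d) (he : isMinRep μ e)
    (hds : e = Equiv.swap (⟨k, by omega⟩ : Fin m) (⟨k + 1, hk⟩ : Fin m) * d)
    (hlen : invLen e = invLen d + 1)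
    (t t' : List ℕ)
    (ht : ofTypeL μ t) (htw : isSeqPerm μ t (w0 * e⁻¹))
    (ht' : ofTypeL μ t') (ht'w : isSeqPerm μ t' (w0 * d⁻¹)) :
    t.getD k 0 = t'.getD (k + 1) 0 ∧
    t.getD (k + 1) 0 = t'.getD k 0 ∧
    (∀ p : ℕ, p ≠ k → p ≠ k + 1 → t.getD p 0 = t'.getD p 0) ∧
    t'.getD k 0 < t'.getD (k + 1) 0 := by
  have hkm : k < m := Nat.lt_of_succ_lt hk
  -- entries of t and t' as block indices
  have hT : ∀ p : ℕ, ∀ hp : p < m, t.getD p 0 = (μ.index (e⁻¹ ⟨p, hp⟩) : ℕ) := by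
    intro p hp
    rw [seq_entry μ t _ ht htw p hp]
    congr 1
    exact hw0 (e⁻¹ ⟨p, hp⟩)
  have hT' : ∀ p : ℕ, ∀ hp : p < m, t'.getD p 0 = (μ.index (d⁻¹ ⟨p, hp⟩) : ℕ) := by
    intro p hp
    rw [seq_entry μ t' _ ht' ht'w p hp]
    congr 1
    exact hw0 (d⁻¹ ⟨p, hp⟩)
  -- e⁻¹ in terms of d⁻¹
  have he' : ∀ j : Fin m, e⁻¹ j
      = d⁻¹ (Equiv.swap (⟨k, hkm⟩ : Fin m) (⟨k + 1, hk⟩ : Fin m) j) := by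
    intro j
    rw [hds, mul_inv_rev, Equiv.swap_inv]
    rfl
  have hswapk : Equiv.swap (⟨k, hkm⟩ : Fin m) (⟨k + 1, hk⟩ : Fin m) ⟨k, hkm⟩
      = ⟨k + 1, hk⟩ := Equiv.swap_apply_left _ _
  have hswapk1 : Equiv.swap (⟨k, hkm⟩ : Fin m) (⟨k + 1, hk⟩ : Fin m) ⟨k + 1, hk⟩
      = ⟨k, hkm⟩ := Equiv.swap_apply_right _ _
  -- the two positions of values k, k+1 in d
  -- Step 1: position of k is before position of k+1 in d, from the length condition
  have hPQ : d⁻¹ (⟨k, hkm⟩ : Fin m) < d⁻¹ ⟨k + 1, hk⟩ := by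
    rcases lt_trichotomy (d⁻¹ (⟨k, hkm⟩ : Fin m)) (d⁻¹ ⟨k + 1, hk⟩) with h | h | h
    · exact h
    · exfalso
      have : (⟨k, hkm⟩ : Fin m) = (⟨k + 1, hk⟩ : Fin m) := by
        apply d⁻¹.injective; exact h
      simp [Fin.ext_iff] at this
    · exfalso
      have h3 := invLen_swap_mul' hk d h
      rw [← hds] at h3
      omega
  -- Step 2: indices not equal
  have hne : μ.index (d⁻¹ (⟨k, hkm⟩ : Fin m)) ≠ μ.index (d⁻¹ ⟨k + 1, hk⟩) := by
    intro heq
    have heP : e (d⁻¹ (⟨k, hkm⟩ : Fin m)) = ⟨k + 1, hk⟩ := by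
      rw [hds, Equiv.Perm.mul_apply, Equiv.Perm.inv_def, Equiv.apply_symm_apply, hswapk]
    have heQ : e (d⁻¹ ⟨k + 1, hk⟩) = ⟨k, hkm⟩ := by
      rw [hds, Equiv.Perm.mul_apply, Equiv.Perm.inv_def, Equiv.apply_symm_apply, hswapk1]
    have hdesc : e (d⁻¹ ⟨k + 1, hk⟩) < e (d⁻¹ (⟨k, hkm⟩ : Fin m)) := by
      rw [heP, heQ]; simp [Fin.lt_def]
    obtain ⟨p, hp, hidx, hpd⟩ := exists_adjacent_descent μ e _ _ hPQ heq hdesc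
    have hu := swap_inYoung μ _ _ hidx
    have hmin := he _ hu
    have hinv : (e * Equiv.swap (⟨p, Nat.lt_of_succ_lt hp⟩ : Fin m) ⟨p + 1, hp⟩)⁻¹
        = Equiv.swap (⟨p, Nat.lt_of_succ_lt hp⟩ : Fin m) ⟨p + 1, hp⟩ * e⁻¹ := by
      rw [mul_inv_rev, Equiv.swap_inv]
    have hcond : (e⁻¹)⁻¹ ⟨p + 1, hp⟩ < (e⁻¹)⁻¹ ⟨p, Nat.lt_of_succ_lt hp⟩ := by
      rw [inv_inv]; exact hpd
    have h4 := invLen_swap_mul' hp e⁻¹ hcond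
    have h5 : invLen (e * Equiv.swap (⟨p, Nat.lt_of_succ_lt hp⟩ : Fin m) ⟨p + 1, hp⟩) + 1 = invLen e := by
      calc invLen (e * Equiv.swap (⟨p, Nat.lt_of_succ_lt hp⟩ : Fin m) ⟨p + 1, hp⟩) + 1
          = invLen ((e * Equiv.swap (⟨p, Nat.lt_of_succ_lt hp⟩ : Fin m) ⟨p + 1, hp⟩)⁻¹) + 1 := by
            rw [invLen_inv]
        _ = invLen e⁻¹ := by rw [hinv]; exact h4
        _ = invLen e := invLen_inv e
    have hlt : invLen (e * Equiv.swap (⟨p, Nat.lt_of_succ_lt hp⟩ : Fin m) ⟨p + 1, hp⟩)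
        < invLen e := Nat.lt_of_lt_of_eq (Nat.lt_succ_self _) h5
    exact Nat.lt_irrefl _ (Nat.lt_of_le_of_lt hmin hlt)
  -- Step 3: conclude indices ordering
  have hle : μ.index (d⁻¹ (⟨k, hkm⟩ : Fin m)) ≤ μ.index (d⁻¹ ⟨k + 1, hk⟩) :=
    index_mono μ (le_of_lt hPQ)
  have hidxlt : (μ.index (d⁻¹ (⟨k, hkm⟩ : Fin m)) : ℕ) < (μ.index (d⁻¹ ⟨k + 1, hk⟩) : ℕ) :=
    lt_of_le_of_ne hle (by simpa [Fin.ext_iff] using hne)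
  refine ⟨?_, ?_, ?_, ?_⟩
  · rw [hT k hkm, hT' (k + 1) hk, he', hswapk]
  · rw [hT (k + 1) hk, hT' k hkm, he', hswapk1]
  · intro p hp1 hp2
    rcases Nat.lt_or_ge p m with hpm | hpm
    · rw [hT p hpm, hT' p hpm, he', Equiv.swap_apply_of_ne_of_ne]
      · simp [Fin.ext_iff]; omega
      · simp [Fin.ext_iff]; omega
    · rw [List.getD_eq_default, List.getD_eq_default]
      · rw [ht'.1]; omega
      · rw [ht.1]; omega
  · rw [hT' k hkm, hT' (k + 1) hk]
    exact hidxlt
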